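/- If f is a distal homeomorphism of a compact metric space X, then every shadowable point of f lies in X^deg, the set of points at which X is totally disconnected. -/

import Mathlib

open Metric Set

/-- Natural iterates of a homeomorphism. -/
def hnpow {X : Type*} [TopologicalSpace X] (f : X ≃ₜ X) : ℕ → X ≃ₜ X
  | 0 => Homeomorph.refl X
  | n+1 => (hnpow f n).trans f

/-- Integer iterates `fⁿ`, `n ∈ ℤ`, of a homeomorphism. -/
def hpow {X : Type*} [TopologicalSpace X] (f : X ≃ₜ X) : ℤ → X ≃ₜ X
  | Int.ofNat n => hnpow f n
  | Int.negSucc n => hnpow f.symm (n+1)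

variable {X : Type*} [MetricSpace X]

/-- `ξ` is a `δ`-pseudo-orbit of `f`. -/
def IsPseudoOrbit (f : X ≃ₜ X) (δ : ℝ) (ξ : ℤ → X) : Prop :=
  ∀ n : ℤ, dist (f (ξ n)) (ξ (n+1)) ≤ δ

/-- `ξ` is `ε`-shadowed by the orbit of `y`. -/
def ShadowedBy (f : X ≃ₜ X) (ε : ℝ) (y : X) (ξ : ℤ → X) : Prop :=
  ∀ n : ℤ, dist (hpow f n y) (ξ n) ≤ ε

/-- `x` is a shadowable point of `f`. -/
def ShadowablePoint (f : X ≃ₜ X) (x : X) : Prop :=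
  ∀ ε > 0, ∃ δ > 0, ∀ ξ : ℤ → X, IsPseudoOrbit f δ ξ → ξ 0 = x →
    ∃ y, ShadowedBy f ε y ξ

/-- `f` has the pseudo-orbit tracing property. -/
def POTP (f : X ≃ₜ X) : Prop :=
  ∀ ε > 0, ∃ δ > 0, ∀ ξ : ℤ → X, IsPseudoOrbit f δ ξ → ∃ y, ShadowedBy f ε y ξ

/-- `x` is a nonwandering point of `f`. -/
def NonWandering (f : X ≃ₜ X) (x : X) : Prop :=
  ∀ U ∈ nhds x, ∃ k : ℕ, 0 < k ∧ ((hpow f (k : ℤ)) '' U ∩ U).Nonempty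

/-- `x` is a chain recurrent point of `f`. -/
def ChainRecurrent (f : X ≃ₜ X) (x : X) : Prop :=
  ∀ ρ > 0, ∃ n : ℕ, 0 < n ∧ ∃ c : ℕ → X, c 0 = x ∧ c n = x ∧
    ∀ i < n, dist (f (c i)) (c (i+1)) ≤ ρ

/-- `f` is distal: `inf_{n∈ℤ} d(fⁿ x, fⁿ y) > 0` for all distinct `x, y`. -/
def Distal (f : X ≃ₜ X) : Prop :=
  ∀ x y : X, x ≠ y → ∃ c > 0, ∀ n : ℤ, c ≤ dist (hpow f n x) (hpow f n y)

/-- `f` is minimal: every full orbit is dense. -/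
def MinimalHomeo (f : X ≃ₜ X) : Prop :=
  ∀ x : X, Dense (Set.range fun n : ℤ => hpow f n x)

/-- `f` is equicontinuous (uniformly, over all integer iterates). -/
def EquicontinuousHomeo (f : X ≃ₜ X) : Prop :=
  ∀ α > 0, ∃ β > 0, ∀ x y : X, dist x y ≤ β → ∀ n : ℤ, dist (hpow f n x) (hpow f n y) ≤ α

lemma hpow_zero' (f : X ≃ₜ X) (x : X) : hpow f 0 x = x := rfl

lemma hpow_succ' (f : X ≃ₜ X) (n : ℤ) (x : X) : hpow f (n + 1) x = f (hpow f n x) := by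
  cases n with
  | ofNat m =>
    have h : (Int.ofNat m) + 1 = Int.ofNat (m + 1) := rfl
    rw [h]
    rfl
  | negSucc m =>
    cases m with
    | zero =>
      have h : Int.negSucc 0 + 1 = Int.ofNat 0 := rfl
      rw [h]
      show x = f (f.symm x)
      simp
    | succ m' =>
      have h : Int.negSucc (m' + 1) + 1 = Int.negSucc m' := by
        rw [Int.negSucc_eq, Int.negSucc_eq]
        push_cast
        ring
      rw [h]
      show hnpow f.symm (m' + 1) x = f (f.symm (hnpow f.symm (m' + 1) x))
      simp

lemma hpow_pred' (f : X ≃ₜ X) (n : ℤ) (x : X) : hpow f (n - 1) x = f.symm (hpow f n x) := by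
  have h := hpow_succ' f (n - 1) x
  rw [sub_add_cancel] at h
  rw [h]
  simp

lemma hpow_add' (f : X ≃ₜ X) (m n : ℤ) (x : X) :
    hpow f (m + n) x = hpow f m (hpow f n x) := by
  induction m using Int.induction_on with
  | zero => rw [zero_add]; rfl
  | succ k ih =>
    have h : (k : ℤ) + 1 + n = (k + n) + 1 := by ring
    rw [h, hpow_succ', ih, hpow_succ']
  | pred k ih =>
    have h : (-(k : ℤ) - 1 + n) = (-(k : ℤ) + n) - 1 := by ring
    rw [h, hpow_pred', ih, hpow_pred']

lemma pair_recur' [CompactSpace X] (f : X ≃ₜ X) (hd : Distal f) (a b : X)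
    {η : ℝ} (hη : 0 < η) (N : ℕ) (_hN : 1 ≤ N) :
    ∃ k : ℕ, N ≤ k ∧ dist (hpow f (k : ℤ) a) a ≤ η ∧ dist (hpow f (k : ℤ) b) b ≤ η := by
  classical
  set T : X × X → X × X := fun p => (hpow f (N : ℤ) p.1, hpow f (N : ℤ) p.2) with hT
  have hTc : Continuous T :=
    ((hpow f (N : ℤ)).continuous.comp continuous_fst).prodMk
      ((hpow f (N : ℤ)).continuous.comp continuous_snd)
  have hTiter : ∀ (m : ℕ) (p : X × X),
      T^[m] p = (hpow f ((N * m : ℕ) : ℤ) p.1, hpow f ((N * m : ℕ) : ℤ) p.2) := by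
    intro m
    induction m with
    | zero => intro p; simp [hpow_zero']
    | succ m ih =>
      intro p
      rw [Function.iterate_succ_apply', ih]
      have hc : ((N * (m + 1) : ℕ) : ℤ) = (N : ℤ) + ((N * m : ℕ) : ℤ) := by push_cast; ring
      rw [hc]
      simp [hT, hpow_add']
  letI : Mul ((X × X) → (X × X)) := ⟨fun g₁ g₂ => g₁ ∘ g₂⟩
  letI : Semigroup ((X × X) → (X × X)) := { mul_assoc := fun _ _ _ => rfl }
  have hmulc : ∀ r : (X × X) → (X × X), Continuous fun χ : (X × X) → (X × X) => χ * r := by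
    intro r
    exact continuous_pi fun y => continuous_apply (r y)
  set G : Set ((X × X) → (X × X)) := {g | ∃ m : ℕ, 1 ≤ m ∧ g = T^[m]} with hG
  have hGmem : ∀ m : ℕ, 1 ≤ m → T^[m] ∈ G := fun m hm => ⟨m, hm, rfl⟩
  have hsne : (closure G).Nonempty := ⟨T^[1], subset_closure (hGmem 1 le_rfl)⟩
  have hscomp : IsCompact (closure G) := isClosed_closure.isCompact
  have hA : ∀ m : ℕ, 1 ≤ m → ∀ ψ ∈ closure G, T^[m] ∘ ψ ∈ closure G := by
    intro m hm ψ hψ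
    have hc : Continuous fun χ : (X × X) → (X × X) => T^[m] ∘ χ :=
      continuous_pi fun y => (hTc.iterate m).comp (continuous_apply y)
    have hmaps : Set.MapsTo (fun χ : (X × X) → (X × X) => T^[m] ∘ χ) G G := by
      rintro g ⟨m', hm', rfl⟩
      exact ⟨m + m', le_trans hm (Nat.le_add_right m m'), (Function.iterate_add T m m').symm⟩
    exact map_mem_closure hc hψ hmaps
  have hmul : ∀ g₁ ∈ closure G, ∀ g₂ ∈ closure G, g₁ * g₂ ∈ closure G := by
    intro g₁ h₁ g₂ h₂
    have hc : Continuous fun χ : (X × X) → (X × X) => χ ∘ g₂ :=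
      continuous_pi fun y => continuous_apply (g₂ y)
    have hmaps : Set.MapsTo (fun χ : (X × X) → (X × X) => χ ∘ g₂) G (closure G) := by
      rintro g ⟨m', hm', rfl⟩
      exact hA m' hm' g₂ h₂
    have h3 := map_mem_closure hc h₁ hmaps
    rwa [isClosed_closure.closure_eq] at h3
  obtain ⟨e, hes, hee⟩ :=
    exists_idempotent_in_compact_subsemigroup hmulc (closure G) hsne hscomp hmul
  have hsep : ∀ p q : X × X, p ≠ q → ∃ c > 0, ∀ m : ℕ, c ≤ dist (T^[m] p) (T^[m] q) := by
    intro p q hpq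
    have hco : p.1 ≠ q.1 ∨ p.2 ≠ q.2 := by
      by_contra hcon
      push_neg at hcon
      exact hpq (Prod.ext hcon.1 hcon.2)
    rcases hco with h1 | h2
    · obtain ⟨c, hc, hcl⟩ := hd p.1 q.1 h1
      refine ⟨c, hc, fun m => ?_⟩
      rw [hTiter m p, hTiter m q, Prod.dist_eq]
      exact le_trans (hcl ((N * m : ℕ) : ℤ)) (le_max_left _ _)
    · obtain ⟨c, hc, hcl⟩ := hd p.2 q.2 h2
      refine ⟨c, hc, fun m => ?_⟩
      rw [hTiter m p, hTiter m q, Prod.dist_eq]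
      exact le_trans (hcl ((N * m : ℕ) : ℤ)) (le_max_right _ _)
  have hfix : ∀ p : X × X, e p = p := by
    intro p
    by_contra hne
    obtain ⟨c, hc, hcl⟩ := hsep p (e p) (fun hh => hne hh.symm)
    have hevc : Continuous fun χ : (X × X) → (X × X) => (χ p, χ (e p)) :=
      (continuous_apply p).prodMk (continuous_apply (e p))
    have hmaps : Set.MapsTo (fun χ : (X × X) → (X × X) => (χ p, χ (e p))) G
        {z : (X × X) × (X × X) | c ≤ dist z.1 z.2} := by
      rintro g ⟨m, hm, rfl⟩
      exact hcl m
    have hclosedK : IsClosed {z : (X × X) × (X × X) | c ≤ dist z.1 z.2} :=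
      isClosed_le continuous_const (continuous_fst.dist continuous_snd)
    have hmem := map_mem_closure hevc hes hmaps
    rw [hclosedK.closure_eq] at hmem
    have h0 : e (e p) = e p := congrFun hee p
    have h1 : c ≤ dist (e p) (e (e p)) := hmem
    rw [h0, dist_self] at h1
    linarith
  have hevc : Continuous fun χ : (X × X) → (X × X) => χ (a, b) := continuous_apply (a, b)
  have hmaps : Set.MapsTo (fun χ : (X × X) → (X × X) => χ (a, b)) G
      {q : X × X | ∃ m : ℕ, 1 ≤ m ∧ q = T^[m] (a, b)} := by
    rintro g ⟨m, hm, rfl⟩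
    exact ⟨m, hm, rfl⟩
  have hmem := map_mem_closure hevc hes hmaps
  rw [hfix (a, b), Metric.mem_closure_iff] at hmem
  obtain ⟨q, ⟨m, hm, rfl⟩, hq⟩ := hmem η hη
  refine ⟨N * m, Nat.le_mul_of_pos_right N hm, ?_, ?_⟩
  · rw [hTiter m (a, b), Prod.dist_eq] at hq
    have := (max_lt_iff.mp hq).1
    rw [dist_comm]
    exact le_of_lt this
  · rw [hTiter m (a, b), Prod.dist_eq] at hq
    have := (max_lt_iff.mp hq).2
    rw [dist_comm]
    exact le_of_lt this

lemma chain_reach' [CompactSpace X] (f : X ≃ₜ X) (hd : Distal f) (x y : X)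
    (hy : y ∈ connectedComponent x) {δ : ℝ} (hδ : 0 < δ) :
    ∃ t : ℕ, ∃ u : ℕ → X, u 0 = x ∧ u t = y ∧
      ∀ i < t, dist (hpow f ((i : ℤ) + 1) (u i)) (hpow f ((i : ℤ) + 1) (u (i + 1))) ≤ δ := by
  classical
  set S : Set X := {z | ∃ t : ℕ, ∃ u : ℕ → X, u 0 = x ∧ u t = z ∧
      ∀ i < t, dist (hpow f ((i : ℤ) + 1) (u i)) (hpow f ((i : ℤ) + 1) (u (i + 1))) ≤ δ} with hS
  have hxS : x ∈ S := ⟨0, fun _ => x, rfl, rfl, fun i hi => absurd hi (Nat.not_lt_zero i)⟩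
  have hopen : IsOpen S := by
    rw [isOpen_iff_mem_nhds]
    rintro z ⟨t, u, hu0, hut, hchain⟩
    have hball : (hpow f ((t : ℤ) + 1)) ⁻¹' (Metric.ball (hpow f ((t : ℤ) + 1) z) δ) ∈ nhds z := by
      refine IsOpen.mem_nhds (Metric.isOpen_ball.preimage (hpow f _).continuous) ?_
      simp [Metric.mem_ball, hδ]
    refine Filter.mem_of_superset hball ?_
    intro w hw
    refine ⟨t + 1, fun i => if i ≤ t then u i else w, ?_, ?_, ?_⟩
    · simp [Nat.zero_le]
      exact hu0
    · simp
    · intro i hi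
      by_cases hit : i < t
      · have e1 : i ≤ t := le_of_lt hit
        have e2 : i + 1 ≤ t := hit
        simp only [if_pos e1, if_pos e2]
        exact hchain i hit
      · have e0 : i = t := by omega
        subst e0
        have e1 : i ≤ i := le_rfl
        have e2 : ¬ (i + 1 ≤ i) := by omega
        simp only [if_pos e1, if_neg e2]
        rw [hut]
        rw [Set.mem_preimage, Metric.mem_ball] at hw
        rw [dist_comm] at hw
        exact le_of_lt hw
  have hclosed : IsClosed S := by
    apply isClosed_of_closure_subset
    intro w hw
    obtain ⟨z, hzS, hdzw⟩ := Metric.mem_closure_iff.mp hw (δ / 4) (by linarith)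
    obtain ⟨t, u, hu0, hut, hchain⟩ := hzS
    obtain ⟨k, hk, hrz, hrw⟩ := pair_recur' f hd z w (by linarith : (0:ℝ) < δ / 4) (t + 1)
      (Nat.le_add_left 1 t)
    have hzz : dist (hpow f (k : ℤ) z) (hpow f (k : ℤ) w) ≤ δ := by
      calc dist (hpow f (k : ℤ) z) (hpow f (k : ℤ) w)
          ≤ dist (hpow f (k : ℤ) z) z + dist z w + dist w (hpow f (k : ℤ) w) :=
            dist_triangle4 _ _ _ _
        _ ≤ δ / 4 + δ / 4 + δ / 4 := by
            have h1 : dist z w ≤ δ / 4 := by rw [dist_comm]; exact le_of_lt hdzw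
            have h2 : dist w (hpow f (k : ℤ) w) ≤ δ / 4 := by rw [dist_comm]; exact hrw
            linarith [hrz, h1, h2]
        _ ≤ δ := by linarith
    refine ⟨k, fun i => if i ≤ t then u i else if i < k then z else w, ?_, ?_, ?_⟩
    · simp [Nat.zero_le]
      exact hu0
    · have e1 : ¬ (k ≤ t) := by omega
      have e2 : ¬ (k < k) := lt_irrefl k
      simp only [if_neg e1, if_neg e2]
    · intro i hi
      by_cases hit : i < t
      · have e1 : i ≤ t := le_of_lt hit
        have e2 : i + 1 ≤ t := hit
        simp only [if_pos e1, if_pos e2]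
        exact hchain i hit
      · by_cases hieq : i = t
        · subst hieq
          have e1 : i ≤ i := le_rfl
          have e2 : ¬ (i + 1 ≤ i) := by omega
          simp only [if_pos e1, if_neg e2]
          rw [hut]
          by_cases h3 : i + 1 < k
          · simp only [if_pos h3]
            simp [hδ.le]
          · have e4 : i + 1 = k := by omega
            simp only [if_neg h3]
            have e5 : ((i : ℤ) + 1) = (k : ℤ) := by exact_mod_cast congrArg (Nat.cast : ℕ → ℤ) e4
            rw [e5]
            exact hzz
        · -- t < i < k
          have e1 : ¬ (i ≤ t) := by omega
          have e2 : i < k := hi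
          have e3 : ¬ (i + 1 ≤ t) := by omega
          simp only [if_neg e1, if_pos e2, if_neg e3]
          by_cases h3 : i + 1 < k
          · simp only [if_pos h3]
            simp [hδ.le]
          · have e4 : i + 1 = k := by omega
            simp only [if_neg h3]
            have e5 : ((i : ℤ) + 1) = (k : ℤ) := by exact_mod_cast congrArg (Nat.cast : ℕ → ℤ) e4
            rw [e5]
            exact hzz
  have hsub : connectedComponent x ⊆ S :=
    IsClopen.connectedComponent_subset ⟨hclosed, hopen⟩ hxS
  exact hsub hy


theorem stmt10 [CompactSpace X] (f : X ≃ₜ X) (h : Distal f) :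
    ∀ x : X, ShadowablePoint f x → connectedComponent x = {x} := by
  intro x hx
  refine Set.eq_singleton_iff_unique_mem.mpr ⟨mem_connectedComponent, ?_⟩
  intro y hy
  by_contra hne
  obtain ⟨c, hc, hcl⟩ := h x y (fun hh => hne hh.symm)
  obtain ⟨δ, hδ, hshad⟩ := hx (c / 8) (by linarith)
  obtain ⟨t, u, hu0, hut, hchain⟩ := chain_reach' f h x y hy hδ
  have ht1 : 1 ≤ t := by
    rcases Nat.eq_zero_or_pos t with h0 | h1
    · exfalso
      apply hne
      rw [← hut, h0, hu0]
    · exact h1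
  classical
  set U : ℤ → X := fun n => if n ≤ 0 then x else if n < (t : ℤ) then u n.toNat else y with hU
  have hU0 : ∀ n : ℤ, n ≤ 0 → U n = x := by
    intro n hn
    simp [hU, if_pos hn]
  have hUy : ∀ n : ℤ, (t : ℤ) ≤ n → U n = y := by
    intro n hn
    have e1 : ¬ (n ≤ 0) := by omega
    have e2 : ¬ (n < (t : ℤ)) := by omega
    simp [hU, if_neg e1, if_neg e2]
  have hUm : ∀ n : ℤ, 0 < n → n < (t : ℤ) → U n = u n.toNat := by
    intro n h1 h2
    have e1 : ¬ (n ≤ 0) := by omega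
    simp [hU, if_neg e1, if_pos h2]
  set ζ : ℤ → X := fun n => hpow f n (U n) with hζ
  have hζ0 : ζ 0 = x := by
    simp [hζ, hU0 0 le_rfl, hpow_zero']
  have hUchain : ∀ n : ℤ, dist (hpow f (n + 1) (U n)) (hpow f (n + 1) (U (n + 1))) ≤ δ := by
    intro n
    rcases le_or_gt (n + 1) 0 with hn | hn
    · rw [hU0 n (by omega), hU0 (n + 1) hn]
      simp [hδ.le]
    · rcases le_or_gt (t : ℤ) n with hn2 | hn2
      · rw [hUy n hn2, hUy (n + 1) (by omega)]
        simp [hδ.le]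
      · -- 0 ≤ n < t
        have hn0 : 0 ≤ n := by omega
        have hUn : U n = u n.toNat := by
          rcases eq_or_lt_of_le hn0 with h1 | h1
          · rw [← h1, hU0 0 le_rfl]
            show x = u (0 : ℤ).toNat
            rw [Int.toNat_zero, hu0]
          · exact hUm n h1 hn2
        have hUn1 : U (n + 1) = u (n.toNat + 1) := by
          by_cases hh : n + 1 < (t : ℤ)
          · rw [hUm (n + 1) (by omega) hh]
            congr 1
            omega
          · rw [hUy (n + 1) (by omega), ← hut]
            congr 1
            omega
        rw [hUn, hUn1]
        have hch := hchain n.toNat (by omega)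
        have hcast : ((n.toNat : ℤ)) = n := Int.toNat_of_nonneg hn0
        rw [hcast] at hch
        exact hch
  have hpseudo : IsPseudoOrbit f δ ζ := by
    intro n
    have e1 : f (ζ n) = hpow f (n + 1) (U n) := by
      rw [hζ]
      exact (hpow_succ' f n (U n)).symm
    rw [e1]
    exact hUchain n
  obtain ⟨v, hv⟩ := hshad ζ hpseudo hζ0
  have hvx : dist v x ≤ c / 8 := by
    have h0 := hv 0
    rw [hζ0] at h0
    rw [← hpow_zero' f v]
    exact h0
  obtain ⟨k, hk, hkv, hky⟩ := pair_recur' f h v y (by linarith : (0:ℝ) < c / 8) t ht1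
  have hvk : dist (hpow f (k : ℤ) v) (hpow f (k : ℤ) y) ≤ c / 8 := by
    have h0 := hv (k : ℤ)
    have e1 : ζ (k : ℤ) = hpow f (k : ℤ) y := by
      show hpow f (k : ℤ) (U (k : ℤ)) = hpow f (k : ℤ) y
      rw [hUy (k : ℤ) (by exact_mod_cast hk)]
    rw [e1] at h0
    exact h0
  have hvy : dist v y ≤ 3 * (c / 8) := by
    calc dist v y ≤ dist v (hpow f (k : ℤ) v) + dist (hpow f (k : ℤ) v) (hpow f (k : ℤ) y)
        + dist (hpow f (k : ℤ) y) y := dist_triangle4 _ _ _ _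
      _ ≤ c / 8 + c / 8 + c / 8 := by
          have h1 : dist v (hpow f (k : ℤ) v) ≤ c / 8 := by rw [dist_comm]; exact hkv
          linarith [hvk, hky]
      _ = 3 * (c / 8) := by ring
  have hfinal : c ≤ dist x y := by
    have h0 := hcl 0
    rw [hpow_zero', hpow_zero'] at h0
    exact h0
  have htri : dist x y ≤ dist x v + dist v y := dist_triangle _ _ _
  have hcomm : dist x v = dist v x := dist_comm _ _
  linarith
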